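/- Suppose 0 < R < 2 and R ≠ R_n. Then at every point x ∈ F⁻¹(0) = M_n(R), the Fréchet derivative of F at x is a surjective linear map from ℝ^{2n+2} onto ℝ^{2n} (equivalently, the 2n gradient vectors ∇f_1(x), …, ∇f_{2n}(x) are linearly independent). -/

import Mathlib

set_option maxHeartbeats 1000000


/-- Euclidean norm of a vector in ℝ². -/
noncomputable def enorm2 (v : ℝ × ℝ) : ℝ := Real.sqrt (v.1 ^ 2 + v.2 ^ 2)

/-- The k-th fixed endpoint `B_k = (R cos(2kπ/n), R sin(2kπ/n))` (indices from 0). -/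
noncomputable def Bpt (n : ℕ) (R : ℝ) (k : Fin n) : ℝ × ℝ :=
  (R * Real.cos (2 * (k.val : ℝ) * Real.pi / (n : ℝ)),
   R * Real.sin (2 * (k.val : ℝ) * Real.pi / (n : ℝ)))

/-- The configuration space `M_n(R)` of spiders with `n` arms of radius `R`,
as a subset of `(ℝ²)^{n+1} ≅ ℝ^{2n+2}`: a pair `(C, J)` with
`|C − J_k| = 1` and `|J_k − B_k| = 1` for all `k`. -/
noncomputable def MSpace (n : ℕ) (R : ℝ) : Set ((ℝ × ℝ) × (Fin n → ℝ × ℝ)) :=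
  {x | ∀ k : Fin n, enorm2 (x.1 - x.2 k) = 1 ∧ enorm2 (x.2 k - Bpt n R k) = 1}

/-- `d_n`, the maximum distance between `n`-th roots of unity. -/
noncomputable def dmax (n : ℕ) : ℝ :=
  if Even n then 2
  else Real.sqrt (2 - 2 * Real.cos (2 * ((n / 2 : ℕ) : ℝ) * Real.pi / (n : ℝ)))

/-- The critical radius `R_n = 2 / d_n`. -/
noncomputable def Rcrit (n : ℕ) : ℝ := 2 / dmax n

/-- The defining map `F = (f_1, …, f_{2n}) : ℝ^{2n+2} → ℝ^{2n}`, with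
`f_{2k−1} = |C − J_k|² − 1` and `f_{2k} = |J_k − B_k|² − 1`, packaged as a map
to `Fin n → ℝ × ℝ` (the `k`-th pair being `(f_{2k−1}, f_{2k})`). -/
noncomputable def Fmap (n : ℕ) (R : ℝ) (x : (ℝ × ℝ) × (Fin n → ℝ × ℝ)) :
    Fin n → ℝ × ℝ := fun k =>
  ((x.1.1 - (x.2 k).1) ^ 2 + (x.1.2 - (x.2 k).2) ^ 2 - 1,
   ((x.2 k).1 - (Bpt n R k).1) ^ 2 + ((x.2 k).2 - (Bpt n R k).2) ^ 2 - 1)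

lemma spider_par_pm (a1 a2 b1 b2 : ℝ) (ha : a1^2+a2^2 = 1) (hb : b1^2+b2^2 = 1)
    (h : a1*b2 - a2*b1 = 0) : (b1 = a1 ∧ b2 = a2) ∨ (b1 = -a1 ∧ b2 = -a2) := by
  have ht : (a1*b1 + a2*b2 - 1) * (a1*b1 + a2*b2 + 1) = 0 := by nlinarith [sq_nonneg (a1*b2 - a2*b1)]
  rcases mul_eq_zero.1 ht with ht | ht
  · left
    constructor <;> nlinarith [sq_nonneg (b1-a1), sq_nonneg (b2-a2), sq_nonneg (b1-a1+(b2-a2)), sq_nonneg (b1-a1-(b2-a2))]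
  · right
    constructor <;> nlinarith [sq_nonneg (b1+a1), sq_nonneg (b2+a2), sq_nonneg (b1+a1+(b2+a2)), sq_nonneg (b1+a1-(b2+a2))]

lemma spider_dist_formula (R a b : ℝ) :
    (R*Real.cos a - R*Real.cos b)^2 + (R*Real.sin a - R*Real.sin b)^2
      = R^2 * (2 - 2*Real.cos (a - b)) := by
  have h1 := Real.sin_sq_add_cos_sq a
  have h2 := Real.sin_sq_add_cos_sq b
  have h3 := Real.cos_sub a b
  nlinarith [h1, h2, h3]

lemma spider_dmax_sq (n : ℕ) (hn : 2 ≤ n) :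
    dmax n ^ 2 = 2 - 2 * Real.cos (2 * ((n / 2 : ℕ) : ℝ) * Real.pi / (n : ℝ)) := by
  have hn0 : (n:ℝ) ≠ 0 := Nat.cast_ne_zero.2 (by omega)
  unfold dmax
  split_ifs with h
  · obtain ⟨m, rfl⟩ := h
    have hm : ((m + m) / 2 : ℕ) = m := by omega
    rw [hm]
    have he : 2 * (m:ℝ) * Real.pi / ((m+m : ℕ):ℝ) = Real.pi := by
      have hm0 : (m:ℝ) ≠ 0 := by
        have : m ≠ 0 := by omega
        exact_mod_cast Nat.cast_ne_zero.2 this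
      push_cast
      field_simp
      ring
    rw [he, Real.cos_pi]
    norm_num
  · rw [Real.sq_sqrt]
    nlinarith [Real.cos_le_one (2 * ((n / 2 : ℕ) : ℝ) * Real.pi / (n : ℝ))]

lemma spider_cos_bound (n : ℕ) (hn : 2 ≤ n) (δ : ℕ) (hδ : δ < n) :
    Real.cos (2 * ((n / 2 : ℕ) : ℝ) * Real.pi / (n : ℝ))
      ≤ Real.cos (2 * (δ : ℝ) * Real.pi / (n : ℝ)) := by
  have hπ := Real.pi_pos
  have hn0 : (0:ℝ) < (n:ℝ) := by positivity
  have hhalf : 2 * ((n / 2 : ℕ) : ℝ) * Real.pi / (n : ℝ) ≤ Real.pi := by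
    rw [div_le_iff₀ hn0]
    have h2 : ((n / 2 * 2 : ℕ) : ℝ) ≤ (n:ℝ) := Nat.cast_le.2 (Nat.div_mul_le_self n 2)
    push_cast at h2
    nlinarith
  rcases le_or_gt δ (n/2) with hc | hc
  · apply Real.cos_le_cos_of_nonneg_of_le_pi (by positivity) hhalf
    gcongr
    all_goals exact_mod_cast Nat.cast_le.2 hc
  · have hnd : n - δ ≤ n/2 := by omega
    have e : Real.cos (2*(δ:ℝ)*Real.pi/(n:ℝ)) = Real.cos (2*((n-δ:ℕ):ℝ)*Real.pi/(n:ℝ)) := by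
      rw [← Real.cos_two_pi_sub]
      congr 1
      push_cast [Nat.cast_sub hδ.le]
      field_simp
    rw [e]
    apply Real.cos_le_cos_of_nonneg_of_le_pi (by positivity) hhalf
    gcongr
    all_goals exact_mod_cast Nat.cast_le.2 hnd

lemma spider_cos_ne_one (n : ℕ) (hn : 2 ≤ n) (δ : ℕ) (h1 : 1 ≤ δ) (h2 : δ < n) :
    Real.cos (2 * (δ : ℝ) * Real.pi / (n : ℝ)) ≠ 1 := by
  have hπ := Real.pi_pos
  have hn0 : (n:ℝ) ≠ 0 := Nat.cast_ne_zero.2 (by omega)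
  intro h
  rw [Real.cos_eq_one_iff] at h
  obtain ⟨z, hz⟩ := h
  have hπ0 : (2*Real.pi) ≠ 0 := by positivity
  field_simp at hz
  have h3 : (2*Real.pi) * ((z:ℝ)*(n:ℝ)) = (2*Real.pi) * (δ:ℝ) := by linear_combination (2*Real.pi) * hz
  have h4 : (z:ℝ)*(n:ℝ) = (δ:ℝ) := mul_left_cancel₀ hπ0 h3
  have h5 : z * (n:ℤ) = (δ:ℤ) := by exact_mod_cast h4
  rcases le_or_gt z 0 with hz0 | hz0
  · nlinarith [h5]
  · have : (1:ℤ) ≤ z := hz0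
    nlinarith [h5]

lemma spider_two_sub_cos_pos (n : ℕ) (hn : 2 ≤ n) (δ : ℕ) (h1 : 1 ≤ δ) (h2 : δ < n) :
    0 < 2 - 2 * Real.cos (2 * (δ : ℝ) * Real.pi / (n : ℝ)) := by
  have := spider_cos_ne_one n hn δ h1 h2
  have h3 := Real.cos_le_one (2 * (δ : ℝ) * Real.pi / (n : ℝ))
  rcases lt_or_eq_of_le h3 with h4 | h4
  · linarith
  · exact absurd h4 this

lemma spider_dmax_pos (n : ℕ) (hn : 2 ≤ n) : 0 < dmax n := by
  have hsq := spider_dmax_sq n hn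
  have hpos : 0 < dmax n ^ 2 := by
    rw [hsq]
    exact spider_two_sub_cos_pos n hn (n/2) (by omega) (by omega)
  have hnn : 0 ≤ dmax n := by
    unfold dmax; split_ifs
    · norm_num
    · exact Real.sqrt_nonneg _
  rcases lt_or_eq_of_le hnn with h | h
  · exact h
  · rw [← h] at hpos; norm_num at hpos

lemma spider_angle_diff (n : ℕ) (hn : 2 ≤ n) (k j : Fin n) (hne : k ≠ j) :
    ∃ δ : ℕ, 1 ≤ δ ∧ δ < n ∧
      Real.cos (2*(k.val:ℝ)*Real.pi/(n:ℝ) - 2*(j.val:ℝ)*Real.pi/(n:ℝ))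
        = Real.cos (2*(δ:ℝ)*Real.pi/(n:ℝ)) := by
  have hvne : k.val ≠ j.val := fun h => hne (Fin.ext h)
  rcases lt_or_gt_of_ne hvne with h | h
  · refine ⟨j.val - k.val, by omega, by omega, ?_⟩
    rw [← Real.cos_neg]
    congr 1
    push_cast [Nat.cast_sub h.le]
    ring
  · refine ⟨k.val - j.val, by omega, by omega, ?_⟩
    congr 1
    push_cast [Nat.cast_sub h.le]
    ring

lemma spider_Bdist (n : ℕ) (R : ℝ) (k j : Fin n) :
    ((Bpt n R k).1 - (Bpt n R j).1)^2 + ((Bpt n R k).2 - (Bpt n R j).2)^2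
      = R^2 * (2 - 2*Real.cos (2*(k.val:ℝ)*Real.pi/(n:ℝ) - 2*(j.val:ℝ)*Real.pi/(n:ℝ))) := by
  simp only [Bpt]
  exact spider_dist_formula R _ _

lemma spider_Bnorm (n : ℕ) (R : ℝ) (k : Fin n) :
    (Bpt n R k).1^2 + (Bpt n R k).2^2 = R^2 := by
  simp only [Bpt]
  nlinarith [Real.sin_sq_add_cos_sq (2*(k.val:ℝ)*Real.pi/(n:ℝ))]

lemma spider_Bne (n : ℕ) (hn : 2 ≤ n) (R : ℝ) (hR0 : 0 < R) (k j : Fin n) (hne : k ≠ j) :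
    ¬((Bpt n R k).1 = (Bpt n R j).1 ∧ (Bpt n R k).2 = (Bpt n R j).2) := by
  rintro ⟨e1, e2⟩
  obtain ⟨δ, hδ1, hδn, hδcos⟩ := spider_angle_diff n hn k j hne
  have hd := spider_Bdist n R k j
  rw [e1, e2, hδcos] at hd
  simp at hd
  have := spider_two_sub_cos_pos n hn δ hδ1 hδn
  rcases hd with hd | hd
  · exact absurd hd (ne_of_gt hR0)
  · linarith

lemma spider_Bdist_le (n : ℕ) (hn : 2 ≤ n) (R : ℝ) (hR0 : 0 < R) (k m : Fin n) :
    ((Bpt n R k).1 - (Bpt n R m).1)^2 + ((Bpt n R k).2 - (Bpt n R m).2)^2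
      ≤ R^2 * dmax n ^ 2 := by
  rcases eq_or_ne k m with rfl | hne
  · have h1 := spider_dmax_pos n hn
    simp
    positivity
  · obtain ⟨δ, hδ1, hδn, hδcos⟩ := spider_angle_diff n hn k m hne
    rw [spider_Bdist, hδcos, spider_dmax_sq n hn]
    have := spider_cos_bound n hn δ hδn
    nlinarith

lemma spider_Bdist_max (n : ℕ) (hn : 2 ≤ n) (R : ℝ) (k : Fin n) :
    ∃ m : Fin n, ((Bpt n R k).1 - (Bpt n R m).1)^2 + ((Bpt n R k).2 - (Bpt n R m).2)^2
      = R^2 * dmax n ^ 2 := by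
  have hnpos : 0 < n := by omega
  have hn0 : (n:ℝ) ≠ 0 := Nat.cast_ne_zero.2 (by omega)
  refine ⟨⟨(k.val + n/2) % n, Nat.mod_lt _ hnpos⟩, ?_⟩
  rw [spider_Bdist, spider_dmax_sq n hn]
  congr 2
  set q := (k.val + n/2) / n with hq
  have hmd : (k.val + n/2) % n + n * q = k.val + n/2 := Nat.mod_add_div _ _
  have hcast : (((k.val + n/2) % n : ℕ) : ℝ) = (k.val:ℝ) + ((n/2:ℕ):ℝ) - (n:ℝ)*(q:ℝ) := by
    have := congrArg (Nat.cast : ℕ → ℝ) hmd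
    push_cast at this
    linarith
  have he : 2*(k.val:ℝ)*Real.pi/(n:ℝ) - 2*((((k.val + n/2) % n : ℕ)):ℝ)*Real.pi/(n:ℝ)
      = ((q:ℤ):ℝ)*(2*Real.pi) - 2*((n/2:ℕ):ℝ)*Real.pi/(n:ℝ) := by
    rw [hcast]
    push_cast
    field_simp
    ring
  rw [he, Real.cos_int_mul_two_pi_sub]

lemma spider_core (n : ℕ) (hn : 2 ≤ n) (R : ℝ) (hR0 : 0 < R) (hR2 : R < 2)
    (hRne : R ≠ Rcrit n) (c1 c2 : ℝ) (u1 u2 v1 v2 : Fin n → ℝ)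
    (hu : ∀ k, u1 k^2 + u2 k^2 = 1) (hv : ∀ k, v1 k^2 + v2 k^2 = 1)
    (hw1 : ∀ k, u1 k + v1 k = c1 - (Bpt n R k).1)
    (hw2 : ∀ k, u2 k + v2 k = c2 - (Bpt n R k).2)
    (r : Fin n → ℝ) :
    ∃ p q : ℝ, ∀ k, u1 k * v2 k - u2 k * v1 k = 0 → u1 k * p + u2 k * q = r k := by
  classical
  have hBne : ∀ k j : Fin n, k ≠ j →
      ¬((Bpt n R k).1 = (Bpt n R j).1 ∧ (Bpt n R k).2 = (Bpt n R j).2) :=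
    fun k j hne => spider_Bne n hn R hR0 k j hne
  have hclass : ∀ k, u1 k * v2 k - u2 k * v1 k = 0 →
      (c1 = (Bpt n R k).1 ∧ c2 = (Bpt n R k).2) ∨ (v1 k = u1 k ∧ v2 k = u2 k) := by
    intro k hal
    rcases spider_par_pm (u1 k) (u2 k) (v1 k) (v2 k) (hu k) (hv k) hal with h | h
    · right; exact h
    · left
      constructor
      · have h1 := hw1 k; rw [h.1] at h1; linarith
      · have h2 := hw2 k; rw [h.2] at h2; linarith
  have hstretch4 : ∀ k, v1 k = u1 k → v2 k = u2 k →
      (c1 - (Bpt n R k).1)^2 + (c2 - (Bpt n R k).2)^2 = 4 := by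
    intro k h1 h2
    have e1 := hw1 k; have e2 := hw2 k
    rw [h1] at e1; rw [h2] at e2
    have e1' : c1 - (Bpt n R k).1 = 2 * u1 k := by linarith
    have e2' : c2 - (Bpt n R k).2 = 2 * u2 k := by linarith
    rw [e1', e2']
    linear_combination 4 * hu k
  have hG2 : ∀ k j : Fin n, k ≠ j → (c1 = (Bpt n R k).1 ∧ c2 = (Bpt n R k).2) →
      (c1 - (Bpt n R j).1)^2 + (c2 - (Bpt n R j).2)^2 = 4 → False := by
    intro k j hne fk h4
    obtain ⟨e1, e2⟩ := fk
    have hle : ∀ m : Fin n, ((Bpt n R k).1 - (Bpt n R m).1)^2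
        + ((Bpt n R k).2 - (Bpt n R m).2)^2 ≤ 4 := by
      intro m
      rw [← e1, ← e2, ← hw1 m, ← hw2 m]
      nlinarith [hu m, hv m, sq_nonneg (u1 m - v1 m), sq_nonneg (u2 m - v2 m)]
    obtain ⟨m, hm⟩ := spider_Bdist_max n hn R k
    have hub : R^2 * dmax n^2 ≤ 4 := by rw [← hm]; exact hle m
    rw [e1, e2] at h4
    have hlb : 4 ≤ R^2 * dmax n^2 := by
      have := spider_Bdist_le n hn R hR0 k j
      linarith
    have hd0 := spider_dmax_pos n hn
    have hRd : R * dmax n = 2 := by nlinarith [mul_pos hR0 hd0]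
    apply hRne
    rw [Rcrit, eq_div_iff (ne_of_gt hd0)]
    linarith
  have hA : ∀ k j : Fin n, k ≠ j → u1 k*v2 k - u2 k*v1 k = 0 → u1 j*v2 j - u2 j*v1 j = 0 →
      u1 k * u2 j - u2 k * u1 j ≠ 0 := by
    intro k j hne hak haj hdet
    rcases hclass k hak with fk | sk
    · rcases hclass j haj with fj | sj
      · exact hBne k j hne ⟨by rw [← fk.1, fj.1], by rw [← fk.2, fj.2]⟩
      · exact hG2 k j hne fk (hstretch4 j sj.1 sj.2)
    · rcases hclass j haj with fj | sj
      · exact hG2 j k hne.symm fj (hstretch4 k sk.1 sk.2)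
      · have e1 := hw1 k; have e2 := hw1 j; have e3 := hw2 k; have e4 := hw2 j
        rw [sk.1] at e1; rw [sj.1] at e2; rw [sk.2] at e3; rw [sj.2] at e4
        rcases spider_par_pm (u1 k) (u2 k) (u1 j) (u2 j) (hu k) (hu j) hdet with h | h
        · exact hBne k j hne ⟨by linarith [h.1], by linarith [h.2]⟩
        · have hb1 : (Bpt n R k).1 - (Bpt n R j).1 = -4 * u1 k := by
            have := h.1; linarith
          have hb2 : (Bpt n R k).2 - (Bpt n R j).2 = -4 * u2 k := by
            have := h.2; linarith
          have hd : ((Bpt n R k).1 - (Bpt n R j).1)^2 + ((Bpt n R k).2 - (Bpt n R j).2)^2 = 16 := by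
            rw [hb1, hb2]; linear_combination 16 * hu k
          nlinarith [spider_Bnorm n R k, spider_Bnorm n R j,
            sq_nonneg ((Bpt n R k).1 + (Bpt n R j).1), sq_nonneg ((Bpt n R k).2 + (Bpt n R j).2)]
  have hB3 : ∀ k j l : Fin n, k ≠ j → k ≠ l → j ≠ l →
      u1 k*v2 k - u2 k*v1 k = 0 → u1 j*v2 j - u2 j*v1 j = 0 → u1 l*v2 l - u2 l*v1 l = 0 →
      False := by
    intro k j l hkj hkl hjl hak haj hal
    have hfold : ∀ a b : Fin n, a ≠ b → (c1 = (Bpt n R a).1 ∧ c2 = (Bpt n R a).2) →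
        (u1 b*v2 b - u2 b*v1 b = 0) → False := by
      intro a b hab fa hb
      rcases hclass b hb with fb | sb
      · exact hBne a b hab ⟨by rw [← fa.1, fb.1], by rw [← fa.2, fb.2]⟩
      · exact hG2 a b hab fa (hstretch4 b sb.1 sb.2)
    rcases hclass k hak with fk | sk
    · exact hfold k j hkj fk haj
    rcases hclass j haj with fj | sj
    · exact hfold j k (Ne.symm hkj) fj hak
    rcases hclass l hal with fl | sl
    · exact hfold l k (Ne.symm hkl) fl hak
    set s : ℝ := (c1^2 + c2^2 + R^2 - 4)/2 with hs
    have hdot : ∀ i : Fin n, (c1 - (Bpt n R i).1)^2 + (c2 - (Bpt n R i).2)^2 = 4 →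
        (Bpt n R i).1 * c1 + (Bpt n R i).2 * c2 = s := by
      intro i hi
      have hb := spider_Bnorm n R i
      linear_combination (1/2) * hb - (1/2) * hi - hs
    by_cases hC : c1^2 + c2^2 = 0
    · have hc10 : c1 = 0 := by nlinarith [sq_nonneg c1, sq_nonneg c2]
      have hc20 : c2 = 0 := by nlinarith [sq_nonneg c1, sq_nonneg c2]
      have h4k := hstretch4 k sk.1 sk.2
      rw [hc10, hc20] at h4k
      have hbk := spider_Bnorm n R k
      nlinarith
    · set t : Fin n → ℝ := fun i => (Bpt n R i).1 * (-c2) + (Bpt n R i).2 * c1 with htdef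
      have ht2 : ∀ i : Fin n, (Bpt n R i).1 * c1 + (Bpt n R i).2 * c2 = s →
          (t i)^2 = R^2*(c1^2+c2^2) - s^2 := by
        intro i hi
        have hb := spider_Bnorm n R i
        simp only [htdef]
        linear_combination (c1^2+c2^2) * hb - ((Bpt n R i).1*c1 + (Bpt n R i).2*c2 + s) * hi
      have hsk' := hdot k (hstretch4 k sk.1 sk.2)
      have hsj' := hdot j (hstretch4 j sj.1 sj.2)
      have hsl' := hdot l (hstretch4 l sl.1 sl.2)
      have htk := ht2 k hsk'
      have htj := ht2 j hsj'
      have htl := ht2 l hsl'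
      have hpt : ∀ a b : Fin n, a ≠ b → (Bpt n R a).1 * c1 + (Bpt n R a).2 * c2 = s →
          (Bpt n R b).1 * c1 + (Bpt n R b).2 * c2 = s → t a ≠ t b := by
        intro a b hab ha hb hteq
        apply hBne a b hab
        constructor
        · have h1 : (Bpt n R a).1 * (c1^2+c2^2) = s*c1 - (t a)*c2 := by
            simp only [htdef]; linear_combination c1 * ha
          have h2 : (Bpt n R b).1 * (c1^2+c2^2) = s*c1 - (t b)*c2 := by
            simp only [htdef]; linear_combination c1 * hb
          have h3 : (Bpt n R a).1 * (c1^2+c2^2) = (Bpt n R b).1 * (c1^2+c2^2) := by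
            rw [h1, h2, hteq]
          exact mul_right_cancel₀ hC h3
        · have h1 : (Bpt n R a).2 * (c1^2+c2^2) = s*c2 + (t a)*c1 := by
            simp only [htdef]; linear_combination c2 * ha
          have h2 : (Bpt n R b).2 * (c1^2+c2^2) = s*c2 + (t b)*c1 := by
            simp only [htdef]; linear_combination c2 * hb
          have h3 : (Bpt n R a).2 * (c1^2+c2^2) = (Bpt n R b).2 * (c1^2+c2^2) := by
            rw [h1, h2, hteq]
          exact mul_right_cancel₀ hC h3
      have hkj2 : (t k - t j)*(t k + t j) = 0 := by linear_combination htk - htj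
      rcases mul_eq_zero.1 hkj2 with h | h
      · exact hpt k j hkj hsk' hsj' (by linarith)
      · have hkl2 : (t k - t l)*(t k + t l) = 0 := by linear_combination htk - htl
        rcases mul_eq_zero.1 hkl2 with h' | h'
        · exact hpt k l hkl hsk' hsl' (by linarith)
        · exact hpt j l hjl hsj' hsl' (by linarith)
  by_cases h1 : ∃ k, u1 k * v2 k - u2 k * v1 k = 0
  · obtain ⟨k₀, hk₀⟩ := h1
    by_cases h2 : ∃ j, (u1 j * v2 j - u2 j * v1 j = 0) ∧ j ≠ k₀
    · obtain ⟨j₀, hj₀, hne⟩ := h2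
      have hD : u1 k₀ * u2 j₀ - u2 k₀ * u1 j₀ ≠ 0 := hA k₀ j₀ (Ne.symm hne) hk₀ hj₀
      refine ⟨(r k₀ * u2 j₀ - r j₀ * u2 k₀)/(u1 k₀ * u2 j₀ - u2 k₀ * u1 j₀),
        (r j₀ * u1 k₀ - r k₀ * u1 j₀)/(u1 k₀ * u2 j₀ - u2 k₀ * u1 j₀), ?_⟩
      intro l hal
      have hl : l = k₀ ∨ l = j₀ := by
        by_contra hno
        push_neg at hno
        exact hB3 l k₀ j₀ hno.1 hno.2 (Ne.symm hne) hal hk₀ hj₀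
      rcases hl with rfl | rfl
      · field_simp
        ring
      · rw [mul_div_assoc', mul_div_assoc', ← add_div, div_eq_iff hD]
        ring
    · push_neg at h2
      refine ⟨r k₀ * u1 k₀, r k₀ * u2 k₀, ?_⟩
      intro l hal
      have hlk : l = k₀ := by
        by_contra hno
        exact hno (h2 l hal)
      subst hlk
      linear_combination (r l) * (hu l)
  · push_neg at h1
    exact ⟨0, 0, fun k hal => absurd hal (h1 k)⟩

/-- If `0 < R < 2` and `R ≠ R_n`, then at every point `x ∈ F⁻¹(0) = M_n(R)` the
Fréchet derivative of `F` at `x` is surjective onto `ℝ^{2n}`. -/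
theorem stmt4 (n : ℕ) (hn : 2 ≤ n) (R : ℝ) (hR0 : 0 < R) (hR2 : R < 2)
    (hRne : R ≠ Rcrit n)
    (x : (ℝ × ℝ) × (Fin n → ℝ × ℝ)) (hx : Fmap n R x = 0) :
    Function.Surjective (fderiv ℝ (Fmap n R) x) := by
  classical
  have hu : ∀ k : Fin n, (x.1.1 - (x.2 k).1)^2 + (x.1.2 - (x.2 k).2)^2 = 1 := by
    intro k
    have h1 := congrArg Prod.fst (congrFun hx k)
    simp only [Fmap, Pi.zero_apply, Prod.fst_zero] at h1
    linarith
  have hv : ∀ k : Fin n, ((x.2 k).1 - (Bpt n R k).1)^2 + ((x.2 k).2 - (Bpt n R k).2)^2 = 1 := by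
    intro k
    have h1 := congrArg Prod.snd (congrFun hx k)
    simp only [Fmap, Pi.zero_apply, Prod.snd_zero] at h1
    linarith
  let P1 : ((ℝ × ℝ) × (Fin n → ℝ × ℝ)) →L[ℝ] ℝ :=
    (ContinuousLinearMap.fst ℝ ℝ ℝ).comp (ContinuousLinearMap.fst ℝ (ℝ×ℝ) (Fin n → ℝ×ℝ))
  let P2 : ((ℝ × ℝ) × (Fin n → ℝ × ℝ)) →L[ℝ] ℝ :=
    (ContinuousLinearMap.snd ℝ ℝ ℝ).comp (ContinuousLinearMap.fst ℝ (ℝ×ℝ) (Fin n → ℝ×ℝ))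
  let Q1 : Fin n → (((ℝ × ℝ) × (Fin n → ℝ × ℝ)) →L[ℝ] ℝ) := fun k =>
    (ContinuousLinearMap.fst ℝ ℝ ℝ).comp ((ContinuousLinearMap.proj k).comp
      (ContinuousLinearMap.snd ℝ (ℝ×ℝ) (Fin n → ℝ×ℝ)))
  let Q2 : Fin n → (((ℝ × ℝ) × (Fin n → ℝ × ℝ)) →L[ℝ] ℝ) := fun k =>
    (ContinuousLinearMap.snd ℝ ℝ ℝ).comp ((ContinuousLinearMap.proj k).comp
      (ContinuousLinearMap.snd ℝ (ℝ×ℝ) (Fin n → ℝ×ℝ)))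
  let A : Fin n → (((ℝ × ℝ) × (Fin n → ℝ × ℝ)) →L[ℝ] ℝ) := fun k => P1 - Q1 k
  let B : Fin n → (((ℝ × ℝ) × (Fin n → ℝ × ℝ)) →L[ℝ] ℝ) := fun k => P2 - Q2 k
  let L : ((ℝ × ℝ) × (Fin n → ℝ × ℝ)) →L[ℝ] (Fin n → ℝ × ℝ) := ContinuousLinearMap.pi fun k =>
    ContinuousLinearMap.prod
      ((x.1.1 - (x.2 k).1) • A k + (x.1.1 - (x.2 k).1) • A k
        + ((x.1.2 - (x.2 k).2) • B k + (x.1.2 - (x.2 k).2) • B k))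
      (((x.2 k).1 - (Bpt n R k).1) • Q1 k + ((x.2 k).1 - (Bpt n R k).1) • Q1 k
        + (((x.2 k).2 - (Bpt n R k).2) • Q2 k + ((x.2 k).2 - (Bpt n R k).2) • Q2 k))
  have hFeq : Fmap n R = fun y : ((ℝ × ℝ) × (Fin n → ℝ × ℝ)) => fun k =>
      ((y.1.1 - (y.2 k).1) * (y.1.1 - (y.2 k).1) + (y.1.2 - (y.2 k).2) * (y.1.2 - (y.2 k).2) - 1,
       ((y.2 k).1 - (Bpt n R k).1) * ((y.2 k).1 - (Bpt n R k).1)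
        + ((y.2 k).2 - (Bpt n R k).2) * ((y.2 k).2 - (Bpt n R k).2) - 1) := by
    funext y k
    simp only [Fmap]
    rw [Prod.mk.injEq]
    constructor <;> ring
  have hP1 : HasFDerivAt (fun y : ((ℝ × ℝ) × (Fin n → ℝ × ℝ)) => y.1.1) P1 x := P1.hasFDerivAt
  have hP2 : HasFDerivAt (fun y : ((ℝ × ℝ) × (Fin n → ℝ × ℝ)) => y.1.2) P2 x := P2.hasFDerivAt
  have hQ1 : ∀ k, HasFDerivAt (fun y : ((ℝ × ℝ) × (Fin n → ℝ × ℝ)) => (y.2 k).1) (Q1 k) x :=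
    fun k => (Q1 k).hasFDerivAt
  have hQ2 : ∀ k, HasFDerivAt (fun y : ((ℝ × ℝ) × (Fin n → ℝ × ℝ)) => (y.2 k).2) (Q2 k) x :=
    fun k => (Q2 k).hasFDerivAt
  have hF : HasFDerivAt (Fmap n R) L x := by
    rw [hFeq]
    apply hasFDerivAt_pi.2
    intro k
    apply HasFDerivAt.prodMk
    · exact ((((hP1.sub (hQ1 k)).mul (hP1.sub (hQ1 k))).add
        ((hP2.sub (hQ2 k)).mul (hP2.sub (hQ2 k)))).sub_const 1)
    · exact ((((hQ1 k).sub_const _).mul ((hQ1 k).sub_const _)).add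
        (((hQ2 k).sub_const _).mul ((hQ2 k).sub_const _))).sub_const 1
  rw [hF.fderiv]
  intro y
  obtain ⟨p, q, hpq⟩ := spider_core n hn R hR0 hR2 hRne x.1.1 x.1.2
    (fun k => x.1.1 - (x.2 k).1) (fun k => x.1.2 - (x.2 k).2)
    (fun k => (x.2 k).1 - (Bpt n R k).1) (fun k => (x.2 k).2 - (Bpt n R k).2)
    hu hv (fun k => by ring) (fun k => by ring)
    (fun k => (y k).1/2 + ((x.1.1 - (x.2 k).1) * ((x.2 k).1 - (Bpt n R k).1)
       + (x.1.2 - (x.2 k).2) * ((x.2 k).2 - (Bpt n R k).2)) * ((y k).2/2))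
  have hex : ∀ k : Fin n, ∃ jk : ℝ × ℝ,
      ((x.1.1 - (x.2 k).1) * jk.1 + (x.1.2 - (x.2 k).2) * jk.2
        = (x.1.1 - (x.2 k).1) * p + (x.1.2 - (x.2 k).2) * q - (y k).1/2)
      ∧ (((x.2 k).1 - (Bpt n R k).1) * jk.1 + ((x.2 k).2 - (Bpt n R k).2) * jk.2
        = (y k).2/2) := by
    intro k
    have huk := hu k
    have hvk := hv k
    have hpqk := hpq k
    set a1 := x.1.1 - (x.2 k).1 with ha1
    set a2 := x.1.2 - (x.2 k).2 with ha2
    set b1 := (x.2 k).1 - (Bpt n R k).1 with hb1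
    set b2 := (x.2 k).2 - (Bpt n R k).2 with hb2
    by_cases hal : a1*b2 - a2*b1 = 0
    · have hr := hpqk hal
      have htt : (a1*b1 + a2*b2)^2 = 1 := by
        linear_combination (b1^2+b2^2)*huk + hvk - (a1*b2 - a2*b1)*hal
      refine ⟨⟨(a1*b1+a2*b2)*((y k).2/2)*a1, (a1*b1+a2*b2)*((y k).2/2)*a2⟩, ?_, ?_⟩
      · linear_combination ((a1*b1+a2*b2)*((y k).2/2))*huk - hr
      · linear_combination ((y k).2/2)*htt
    · refine ⟨⟨((a1*p+a2*q-(y k).1/2)*b2 - ((y k).2/2)*a2)/(a1*b2-a2*b1),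
        (((y k).2/2)*a1 - (a1*p+a2*q-(y k).1/2)*b1)/(a1*b2-a2*b1)⟩, ?_, ?_⟩
      · field_simp
        ring
      · rw [mul_div_assoc', mul_div_assoc', ← add_div, div_eq_iff hal]
        ring
  choose jj hj1 hj2 using hex
  refine ⟨((p, q), jj), ?_⟩
  funext k
  have h1 := hj1 k
  have h2 := hj2 k
  have happ : L ((p, q), jj) k
      = ((x.1.1 - (x.2 k).1) * (p - (jj k).1) + (x.1.1 - (x.2 k).1) * (p - (jj k).1)
          + ((x.1.2 - (x.2 k).2) * (q - (jj k).2) + (x.1.2 - (x.2 k).2) * (q - (jj k).2)),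
         ((x.2 k).1 - (Bpt n R k).1) * (jj k).1 + ((x.2 k).1 - (Bpt n R k).1) * (jj k).1
          + (((x.2 k).2 - (Bpt n R k).2) * (jj k).2 + ((x.2 k).2 - (Bpt n R k).2) * (jj k).2)) := by
    simp [L, A, B, P1, P2, Q1, Q2, ContinuousLinearMap.coe_fst', ContinuousLinearMap.coe_snd',
      ContinuousLinearMap.proj_apply]
  rw [happ]
  rw [Prod.mk.injEq]
  constructor
  · linear_combination (-2 : ℝ) * h1
  · linear_combination (2 : ℝ) * h2
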